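/- Let f : ℝ → ℝ be twice continuously differentiable with bounded first and second derivatives, and define g : ℝ^r → ℝ by g(s) = f(∑_{j=1}^r s_j²)/4. Let Σ_S = (σ_{jk}) be the covariance matrix of the random vector S = (S_1, …, S_r)ᵀ. Then ∑_{j,k=1}^r σ_{jk} E[∂²g/∂s_j∂s_k (S)] − E[∑_{j=1}^r S_j · ∂g/∂s_j (S)] = E[F_r f''(F_r) + (1/2)(r − 1 − F_r) f'(F_r)]. -/

import Mathlib

open MeasureTheory Finset Real

noncomputable section

instance instMSPerm (r : ℕ) : MeasurableSpace (Equiv.Perm (Fin r)) := ⊤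

/-- The joint law of `n` independent uniformly random permutations of `{1, …, r}`:
the uniform probability measure on the finite product space. -/
def friedmanMeasure (n r : ℕ) : Measure (Fin n → Equiv.Perm (Fin r)) :=
  (PMF.uniformOfFintype (Fin n → Equiv.Perm (Fin r))).toMeasure

/-- `ρ_i(j) = π_i(j) - (r+1)/2`, where `π_i(j) ∈ {1, …, r}` is the rank assigned by the
`i`-th permutation to treatment `j` (a permutation of `Fin r` assigns values in `{0, …, r-1}`,
hence the `+ 1`). -/
def rho (n r : ℕ) (i : Fin n) (j : Fin r) (ω : Fin n → Equiv.Perm (Fin r)) : ℝ :=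
  ((ω i j : ℕ) : ℝ) + 1 - ((r : ℝ) + 1) / 2

/-- `S_j = (√12/√(r(r+1)n)) ∑_{i=1}^n ρ_i(j)`. -/
def Sstat (n r : ℕ) (j : Fin r) (ω : Fin n → Equiv.Perm (Fin r)) : ℝ :=
  Real.sqrt 12 / Real.sqrt ((r : ℝ) * ((r : ℝ) + 1) * (n : ℝ)) * ∑ i, rho n r i j ω

/-- Friedman's statistic `F_r = ∑_{j=1}^r S_j²`. -/
def friedman (n r : ℕ) (ω : Fin n → Equiv.Perm (Fin r)) : ℝ :=
  ∑ j, (Sstat n r j ω) ^ 2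

/-- The chi-square distribution with `p` degrees of freedom: the Gamma distribution
with shape `p/2` and rate `1/2`. -/
def chiSq (p : ℕ) : Measure ℝ := ProbabilityTheory.gammaMeasure ((p : ℝ) / 2) (1 / 2)

end

noncomputable section

/-- The partial derivative `∂g/∂s_j` of a function `g : ℝ^ι → ℝ` at the point `s`. -/
def pd {ι : Type*} [DecidableEq ι] (j : ι) (g : (ι → ℝ) → ℝ) (s : ι → ℝ) : ℝ :=
  deriv (fun t => g (Function.update s j t)) (s j)

/-- The covariance `σ_{jk} = Cov(S_j, S_k)` of the random vector `S = (S_1, …, S_r)ᵀ`. -/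
def covS (n r : ℕ) (j k : Fin r) : ℝ :=
  (∫ ω, Sstat n r j ω * Sstat n r k ω ∂(friedmanMeasure n r)) -
    (∫ ω, Sstat n r j ω ∂(friedmanMeasure n r)) *
      (∫ ω, Sstat n r k ω ∂(friedmanMeasure n r))

end


lemma sumPiCoord {ι β : Type*} [Fintype ι] [DecidableEq ι] [Fintype β] (i : ι) (g : β → ℝ) :
    ∑ ω : ι → β, g (ω i) = (Fintype.card β : ℝ) ^ (Fintype.card ι - 1) * ∑ b, g b := by
  rw [← Equiv.sum_comp (Equiv.piSplitAt i fun _ => β).symm (fun ω => g (ω i))]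
  have h : ∀ x : β × ({j : ι // j ≠ i} → β),
      ((Equiv.piSplitAt i fun _ => β).symm x) i = x.1 := by
    intro x; simp [Equiv.piSplitAt_symm_apply]
  simp only [h]
  rw [Fintype.sum_prod_type]
  have hc : Fintype.card ({j : ι // j ≠ i} → β) = Fintype.card β ^ (Fintype.card ι - 1) := by
    rw [Fintype.card_fun, Fintype.card_subtype_compl, Fintype.card_subtype_eq]
  simp only [Finset.sum_const, card_univ, nsmul_eq_mul, hc]
  rw [← Finset.mul_sum]
  push_cast
  ring

lemma sumPiCoord2 {ι β : Type*} [Fintype ι] [DecidableEq ι] [Fintype β] {i i' : ι}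
    (hii : i' ≠ i) (g h' : β → ℝ) :
    ∑ ω : ι → β, g (ω i) * h' (ω i')
      = (Fintype.card β : ℝ) ^ (Fintype.card ι - 2) * ((∑ b, g b) * (∑ b, h' b)) := by
  rw [← Equiv.sum_comp (Equiv.piSplitAt i fun _ => β).symm
    (fun ω => g (ω i) * h' (ω i'))]
  have h1 : ∀ x : β × ({j : ι // j ≠ i} → β),
      ((Equiv.piSplitAt i fun _ => β).symm x) i = x.1 := by
    intro x; simp [Equiv.piSplitAt_symm_apply]
  have h2 : ∀ x : β × ({j : ι // j ≠ i} → β),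
      ((Equiv.piSplitAt i fun _ => β).symm x) i' = x.2 ⟨i', hii⟩ := by
    intro x; simp [Equiv.piSplitAt_symm_apply, hii]
  simp only [h1, h2]
  rw [Fintype.sum_prod_type]
  have : ∀ p : β, ∑ ρ : {j : ι // j ≠ i} → β, g p * h' (ρ ⟨i', hii⟩)
      = g p * ((Fintype.card β : ℝ) ^ (Fintype.card {j : ι // j ≠ i} - 1) * ∑ b, h' b) := by
    intro p
    rw [← Finset.mul_sum, sumPiCoord (⟨i', hii⟩ : {j : ι // j ≠ i}) h']
  simp only [this]
  rw [← Finset.sum_mul]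
  have hc : Fintype.card {j : ι // j ≠ i} - 1 = Fintype.card ι - 2 := by
    rw [Fintype.card_subtype_compl, Fintype.card_subtype_eq]
    omega
  rw [hc]; ring

lemma perm_sum_single {r : ℕ} (hr : 1 ≤ r) (a : Fin r → ℝ) (j : Fin r) :
    ∑ p : Equiv.Perm (Fin r), a (p j) = ((r - 1).factorial : ℝ) * ∑ v, a v := by
  have hinv : ∀ k : Fin r, ∑ p : Equiv.Perm (Fin r), a (p k)
      = ∑ p : Equiv.Perm (Fin r), a (p j) := by
    intro k
    rw [← Equiv.sum_comp (Equiv.mulRight (Equiv.swap j k)) (fun p => a (p k))]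
    apply Finset.sum_congr rfl
    intro p _
    simp [Equiv.Perm.mul_apply, Equiv.swap_apply_left]
  have key : (r : ℝ) * ∑ p : Equiv.Perm (Fin r), a (p j)
      = (r.factorial : ℝ) * ∑ v, a v := by
    calc (r : ℝ) * ∑ p : Equiv.Perm (Fin r), a (p j)
        = ∑ k : Fin r, ∑ p : Equiv.Perm (Fin r), a (p k) := by
          rw [Finset.sum_congr rfl (fun k _ => hinv k), Finset.sum_const, card_univ,
            Fintype.card_fin, nsmul_eq_mul]
      _ = ∑ p : Equiv.Perm (Fin r), ∑ k : Fin r, a (p k) := Finset.sum_comm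
      _ = ∑ p : Equiv.Perm (Fin r), ∑ v, a v := by
          exact Finset.sum_congr rfl (fun p _ => Equiv.sum_comp p a)
      _ = (r.factorial : ℝ) * ∑ v, a v := by
          rw [Finset.sum_const, card_univ, Fintype.card_perm, Fintype.card_fin, nsmul_eq_mul]
  have hr0 : (r : ℝ) ≠ 0 := by positivity
  have hfact : (r.factorial : ℝ) = (r : ℝ) * ((r - 1).factorial : ℝ) := by
    rw [← Nat.mul_factorial_pred (by omega : r ≠ 0)]; push_cast; ring
  field_simp [hfact] at key
  apply mul_left_cancel₀ hr0
  rw [key, hfact]; ring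

lemma perm_sum_pair {r : ℕ} (hr : 2 ≤ r) (a b : Fin r → ℝ) {j k : Fin r} (hjk : j ≠ k) :
    ∑ p : Equiv.Perm (Fin r), a (p j) * b (p k)
      = ((r - 2).factorial : ℝ) * ((∑ v, a v) * (∑ v, b v) - ∑ v, a v * b v) := by
  have hr1 : 1 ≤ r := le_trans (by norm_num) hr
  -- invariance for k' ≠ j
  have hinv : ∀ k' : Fin r, k' ≠ j → ∑ p : Equiv.Perm (Fin r), a (p j) * b (p k')
      = ∑ p : Equiv.Perm (Fin r), a (p j) * b (p k) := by
    intro k' hk'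
    rw [← Equiv.sum_comp (Equiv.mulRight (Equiv.swap k k')) (fun p => a (p j) * b (p k'))]
    apply Finset.sum_congr rfl
    intro p _
    have h1 : (Equiv.swap k k') j = j :=
      Equiv.swap_apply_of_ne_of_ne hjk (Ne.symm hk')
    simp [Equiv.Perm.mul_apply, h1, Equiv.swap_apply_left]
  have key : ((r : ℝ) - 1) * ∑ p : Equiv.Perm (Fin r), a (p j) * b (p k)
      = ((r - 1).factorial : ℝ) * ((∑ v, a v) * (∑ v, b v) - ∑ v, a v * b v) := by
    have hsplit : ∑ k' ∈ Finset.univ.erase j, ∑ p : Equiv.Perm (Fin r), a (p j) * b (p k')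
        = ((r : ℝ) - 1) * ∑ p : Equiv.Perm (Fin r), a (p j) * b (p k) := by
      rw [Finset.sum_congr rfl (fun k' hk' => hinv k' (Finset.ne_of_mem_erase hk')),
        Finset.sum_const, Finset.card_erase_of_mem (mem_univ j), card_univ, Fintype.card_fin,
        nsmul_eq_mul]
      congr 1
      push_cast [Nat.cast_sub hr1]
      ring
    rw [← hsplit, Finset.sum_comm]
    have hterm : ∀ p : Equiv.Perm (Fin r),
        ∑ k' ∈ Finset.univ.erase j, a (p j) * b (p k')
          = a (p j) * (∑ v, b v) - (fun v => a v * b v) (p j) := by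
      intro p
      rw [← Finset.mul_sum, Finset.sum_erase_eq_sub (mem_univ j), Equiv.sum_comp p b]
      ring
    rw [Finset.sum_congr rfl (fun p _ => hterm p), Finset.sum_sub_distrib,
      ← Finset.sum_mul, perm_sum_single hr1 a j, perm_sum_single hr1 (fun v => a v * b v) j]
    ring
  have hr2 : ((r : ℝ) - 1) ≠ 0 := by
    have : (2 : ℝ) ≤ (r : ℝ) := by exact_mod_cast hr
    linarith
  apply mul_left_cancel₀ hr2
  rw [key]
  have hfact : ((r - 1).factorial : ℝ) = ((r : ℝ) - 1) * ((r - 2).factorial : ℝ) := by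
    have h1 : 1 ≤ r - 1 := by omega
    have : (r - 1) * (r - 1 - 1).factorial = (r - 1).factorial := Nat.mul_factorial_pred (by omega)
    have h2 : r - 1 - 1 = r - 2 := by omega
    rw [h2] at this
    rw [← this]
    push_cast [Nat.cast_sub hr1]
    ring
  rw [hfact]; ring


lemma sum_range_cast (m : ℕ) : ∑ i ∈ Finset.range m, (i : ℝ) = m * (m - 1) / 2 := by
  induction m with
  | zero => simp
  | succ p ih => rw [Finset.sum_range_succ, ih]; push_cast; ring

lemma sum_range_sq_cast (m : ℕ) :
    ∑ i ∈ Finset.range m, (i : ℝ) ^ 2 = m * (m - 1) * (2 * m - 1) / 6 := by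
  induction m with
  | zero => simp
  | succ p ih => rw [Finset.sum_range_succ, ih]; push_cast; ring

lemma fin_sum_a (r : ℕ) :
    ∑ v : Fin r, (((v : ℕ) : ℝ) + 1 - ((r : ℝ) + 1) / 2) = 0 := by
  rw [Fin.sum_univ_eq_sum_range (fun m : ℕ => (m : ℝ) + 1 - ((r : ℝ) + 1) / 2) r]
  have : ∀ i ∈ Finset.range r, (i : ℝ) + 1 - ((r : ℝ) + 1) / 2
      = (i : ℝ) + (1 - ((r : ℝ) + 1) / 2) := fun i _ => by ring
  rw [Finset.sum_congr rfl this, Finset.sum_add_distrib, Finset.sum_const, Finset.card_range,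
    nsmul_eq_mul, sum_range_cast]
  ring

lemma fin_sum_a_sq (r : ℕ) :
    ∑ v : Fin r, (((v : ℕ) : ℝ) + 1 - ((r : ℝ) + 1) / 2) ^ 2
      = (r : ℝ) * ((r : ℝ) ^ 2 - 1) / 12 := by
  rw [Fin.sum_univ_eq_sum_range (fun m : ℕ => ((m : ℝ) + 1 - ((r : ℝ) + 1) / 2) ^ 2) r]
  have : ∀ i ∈ Finset.range r, ((i : ℝ) + 1 - ((r : ℝ) + 1) / 2) ^ 2
      = (i : ℝ) ^ 2 + (2 - ((r : ℝ) + 1)) * (i : ℝ) + (1 - ((r : ℝ) + 1) / 2) ^ 2 :=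
    fun i _ => by ring
  rw [Finset.sum_congr rfl this, Finset.sum_add_distrib, Finset.sum_add_distrib,
    Finset.sum_const, Finset.card_range, nsmul_eq_mul, ← Finset.mul_sum,
    sum_range_cast, sum_range_sq_cast]
  ring

open Finset MeasureTheory

lemma friedman_integral (n r : ℕ) (g : (Fin n → Equiv.Perm (Fin r)) → ℝ) :
    ∫ ω, g ω ∂(friedmanMeasure n r)
      = (Fintype.card (Fin n → Equiv.Perm (Fin r)) : ℝ)⁻¹ * ∑ ω, g ω := by
  have : IsProbabilityMeasure (friedmanMeasure n r) := PMF.toMeasure.isProbabilityMeasure _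
  rw [MeasureTheory.integral_fintype (MeasureTheory.Integrable.of_finite)]
  have : ∀ ω : Fin n → Equiv.Perm (Fin r),
      ((friedmanMeasure n r) {ω}).toReal = (Fintype.card (Fin n → Equiv.Perm (Fin r)) : ℝ)⁻¹ := by
    intro ω
    rw [friedmanMeasure, PMF.toMeasure_apply_singleton _ _ (measurableSet_singleton ω),
      PMF.uniformOfFintype_apply]
    simp [ENNReal.toReal_inv]
  simp only [Measure.real, this, smul_eq_mul, ← Finset.mul_sum]

noncomputable def theA (r : ℕ) : Fin r → ℝ := fun v => ((v : ℕ) : ℝ) + 1 - ((r : ℝ) + 1) / 2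

lemma rho_eq (n r : ℕ) (i : Fin n) (j : Fin r) (ω : Fin n → Equiv.Perm (Fin r)) :
    rho n r i j ω = theA r (ω i j) := rfl

lemma theA_sum (r : ℕ) : ∑ v, theA r v = 0 := fin_sum_a r

lemma theA_sum_mul (r : ℕ) :
    ∑ v, theA r v * theA r v = (r : ℝ) * ((r : ℝ) ^ 2 - 1) / 12 := by
  have h := fin_sum_a_sq r
  rw [← h]
  exact Finset.sum_congr rfl fun v _ => by rw [theA]; ring

lemma sum_Sstat_omega (n r : ℕ) (j : Fin r) :
    ∑ ω : Fin n → Equiv.Perm (Fin r), Sstat n r j ω = 0 := by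
  have hr : 1 ≤ r := j.pos
  simp only [Sstat, rho_eq]
  rw [← Finset.mul_sum, Finset.sum_comm]
  have hz : ∀ i : Fin n,
      ∑ ω : Fin n → Equiv.Perm (Fin r), theA r (ω i j) = 0 := by
    intro i
    rw [sumPiCoord i (fun p : Equiv.Perm (Fin r) => theA r (p j)),
      perm_sum_single hr (fun v => theA r v) j]
    simp [theA_sum r]
  rw [Finset.sum_congr rfl fun i _ => hz i]
  simp

lemma sum_Sstat_mul (n r : ℕ) (hn : 1 ≤ n) (hr : 2 ≤ r) (j k : Fin r) :
    ∑ ω : Fin n → Equiv.Perm (Fin r), Sstat n r j ω * Sstat n r k ω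
      = (Fintype.card (Fin n → Equiv.Perm (Fin r)) : ℝ)
        * (if j = k then ((r : ℝ) - 1) / (r : ℝ) else -1 / (r : ℝ)) := by
  have hr1 : 1 ≤ r := by omega
  set c : ℝ := Real.sqrt 12 / Real.sqrt ((r : ℝ) * ((r : ℝ) + 1) * (n : ℝ)) with hcdef
  set T : ℝ := ∑ p : Equiv.Perm (Fin r), theA r (p j) * theA r (p k) with hT
  have hstep : ∀ ω : Fin n → Equiv.Perm (Fin r), Sstat n r j ω * Sstat n r k ω
      = c ^ 2 * ∑ i : Fin n, ∑ i' : Fin n, theA r (ω i j) * theA r (ω i' k) := by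
    intro ω
    simp only [Sstat, rho_eq, ← hcdef]
    rw [← Finset.sum_mul_sum]
    ring
  rw [Finset.sum_congr rfl fun ω _ => hstep ω, ← Finset.mul_sum, Finset.sum_comm]
  have hin : ∀ i : Fin n, ∑ ω : Fin n → Equiv.Perm (Fin r),
      ∑ i' : Fin n, theA r (ω i j) * theA r (ω i' k)
      = (Fintype.card (Equiv.Perm (Fin r)) : ℝ) ^ (n - 1) * T := by
    intro i
    rw [Finset.sum_comm]
    have hone : ∀ i' : Fin n,
        ∑ ω : Fin n → Equiv.Perm (Fin r), theA r (ω i j) * theA r (ω i' k)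
          = if i' = i then (Fintype.card (Equiv.Perm (Fin r)) : ℝ) ^ (n - 1) * T else 0 := by
      intro i'
      by_cases hii : i' = i
      · subst hii
        rw [if_pos rfl,
          sumPiCoord i' (fun p : Equiv.Perm (Fin r) => theA r (p j) * theA r (p k))]
        simp [hT]
      · rw [if_neg hii,
          sumPiCoord2 hii (fun p : Equiv.Perm (Fin r) => theA r (p j))
            (fun p : Equiv.Perm (Fin r) => theA r (p k)),
          perm_sum_single hr1 (fun v => theA r v) j, theA_sum r]
        simp
    rw [Finset.sum_congr rfl fun i' _ => hone i']
    simp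
  rw [Finset.sum_congr rfl fun i _ => hin i, Finset.sum_const, card_univ, Fintype.card_fin,
    nsmul_eq_mul]
  -- now pure arithmetic
  have hc2 : c ^ 2 = 12 / ((r : ℝ) * ((r : ℝ) + 1) * (n : ℝ)) := by
    rw [hcdef, div_pow, Real.sq_sqrt (by norm_num : (0:ℝ) ≤ 12),
      Real.sq_sqrt (by positivity)]
  have hTval : T = if j = k then ((r - 1).factorial : ℝ) * ((r : ℝ) * ((r : ℝ) ^ 2 - 1) / 12)
      else -(((r - 2).factorial : ℝ) * ((r : ℝ) * ((r : ℝ) ^ 2 - 1) / 12)) := by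
    by_cases hjk : j = k
    · subst hjk
      rw [if_pos rfl, hT, perm_sum_single hr1 (fun v => theA r v * theA r v) j, theA_sum_mul r]
    · rw [if_neg hjk, hT,
        perm_sum_pair hr (fun v => theA r v) (fun v => theA r v) hjk,
        theA_sum r, theA_sum_mul r]
      ring
  have hcardfun : (Fintype.card (Fin n → Equiv.Perm (Fin r)) : ℝ)
      = (Fintype.card (Equiv.Perm (Fin r)) : ℝ) ^ (n - 1)
        * (Fintype.card (Equiv.Perm (Fin r)) : ℝ) := by
    rw [Fintype.card_fun, Fintype.card_fin]
    push_cast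
    rw [← pow_succ]
    congr 1
    omega
  have hcardperm : (Fintype.card (Equiv.Perm (Fin r)) : ℝ) = (r.factorial : ℝ) := by
    rw [Fintype.card_perm, Fintype.card_fin]
  have hf1 : (r.factorial : ℝ) = (r : ℝ) * ((r - 1).factorial : ℝ) := by
    rw [← Nat.mul_factorial_pred (by omega : r ≠ 0)]; push_cast; ring
  have hf2 : ((r - 1).factorial : ℝ) = ((r : ℝ) - 1) * ((r - 2).factorial : ℝ) := by
    have h1 : 1 ≤ r - 1 := by omega
    have h := Nat.mul_factorial_pred (n := r - 1) (by omega)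
    have h2 : r - 1 - 1 = r - 2 := by omega
    rw [h2] at h
    rw [← h]
    push_cast [Nat.cast_sub hr1]
    ring
  have hrne : (r : ℝ) ≠ 0 := by positivity
  have hrne1 : (r : ℝ) + 1 ≠ 0 := by positivity
  have hnne : (n : ℝ) ≠ 0 := by
    have : (1:ℝ) ≤ (n:ℝ) := by exact_mod_cast hn
    linarith
  rw [hc2, hTval, hcardfun, hcardperm, hf1, hf2]
  by_cases hjk : j = k
  · rw [if_pos hjk, if_pos hjk]
    field_simp
    ring
  · rw [if_neg hjk, if_neg hjk]
    field_simp
    ring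

lemma covS_eq (n r : ℕ) (hn : 1 ≤ n) (hr : 2 ≤ r) (j k : Fin r) :
    covS n r j k = if j = k then ((r : ℝ) - 1) / (r : ℝ) else -1 / (r : ℝ) := by
  rw [covS, friedman_integral, friedman_integral, friedman_integral,
    sum_Sstat_omega, sum_Sstat_omega, sum_Sstat_mul n r hn hr j k]
  have hN : (Fintype.card (Fin n → Equiv.Perm (Fin r)) : ℝ) ≠ 0 := by
    have : 0 < Fintype.card (Fin n → Equiv.Perm (Fin r)) := Fintype.card_pos
    positivity
  field_simp
  by_cases hjk : j = k
  · simp only [if_pos hjk]; ring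
  · simp only [if_neg hjk]; ring

lemma sum_Sstat_fiber (n r : ℕ) (ω : Fin n → Equiv.Perm (Fin r)) :
    ∑ j, Sstat n r j ω = 0 := by
  simp only [Sstat, rho_eq, ← Finset.mul_sum]
  rw [Finset.sum_comm]
  have : ∀ i : Fin n, ∑ j, theA r ((ω i) j) = 0 := by
    intro i
    rw [Equiv.sum_comp (ω i) (theA r), theA_sum r]
  rw [Finset.sum_congr rfl fun i _ => this i]
  simp

lemma sum_update_sq (r : ℕ) (s : Fin r → ℝ) (k : Fin r) (t : ℝ) :
    ∑ l, (Function.update s k t l) ^ 2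
      = t ^ 2 + ∑ l ∈ Finset.univ \ {k}, (s l) ^ 2 := by
  have h : ∀ l, (Function.update s k t l) ^ 2
      = Function.update (fun m => (s m) ^ 2) k (t ^ 2) l := by
    intro l
    by_cases hl : l = k
    · subst hl; simp
    · simp [Function.update_of_ne hl]
  rw [Finset.sum_congr rfl fun l _ => h l,
    Finset.sum_update_of_mem (Finset.mem_univ k)]

lemma sum_sq_split (r : ℕ) (s : Fin r → ℝ) (k : Fin r) :
    (s k) ^ 2 + ∑ l ∈ Finset.univ \ {k}, (s l) ^ 2 = ∑ l, (s l) ^ 2 := by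
  rw [← sum_update_sq r s k (s k)]
  simp

lemma pd_g_eq (r : ℕ) (f f' : ℝ → ℝ) (hf1 : ∀ x, HasDerivAt f (f' x) x)
    (k : Fin r) (s : Fin r → ℝ) :
    pd k (fun s' : Fin r → ℝ => f (∑ l, (s' l) ^ 2) / 4) s
      = s k * f' (∑ l, (s l) ^ 2) / 2 := by
  simp only [pd]
  set R := ∑ l ∈ Finset.univ \ {k}, (s l) ^ 2 with hR
  have heq : (fun t : ℝ => f (∑ l, (Function.update s k t l) ^ 2) / 4)
      = fun t : ℝ => f (t ^ 2 + R) / 4 := funext fun t => by rw [sum_update_sq r s k t]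
  rw [heq]
  have h1 : HasDerivAt (fun t : ℝ => t ^ 2 + R) (2 * s k) (s k) := by
    simpa using (hasDerivAt_pow 2 (s k)).add_const R
  have h2 : HasDerivAt (fun t : ℝ => f (t ^ 2 + R) / 4)
      (f' ((s k) ^ 2 + R) * (2 * s k) / 4) (s k) :=
    ((hf1 ((s k) ^ 2 + R)).comp (s k) h1).div_const 4
  rw [h2.deriv, sum_sq_split r s k]
  ring

lemma pd_pd_g_eq (r : ℕ) (f f' f'' : ℝ → ℝ)
    (hf1 : ∀ x, HasDerivAt f (f' x) x) (hf2 : ∀ x, HasDerivAt f' (f'' x) x)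
    (j k : Fin r) (s : Fin r → ℝ) :
    pd j (fun s'' => pd k (fun s' : Fin r → ℝ => f (∑ l, (s' l) ^ 2) / 4) s'') s
      = (if j = k then f' (∑ l, (s l) ^ 2) / 2 else 0)
        + s j * s k * f'' (∑ l, (s l) ^ 2) := by
  have h0 : (fun s'' : Fin r → ℝ =>
        pd k (fun s' : Fin r → ℝ => f (∑ l, (s' l) ^ 2) / 4) s'')
      = fun s'' : Fin r → ℝ => s'' k * f' (∑ l, (s'' l) ^ 2) / 2 :=
    funext fun s'' => pd_g_eq r f f' hf1 k s''
  rw [h0]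
  simp only [pd]
  set R := ∑ l ∈ Finset.univ \ {j}, (s l) ^ 2 with hR
  have h1 : HasDerivAt (fun t : ℝ => t ^ 2 + R) (2 * s j) (s j) := by
    simpa using (hasDerivAt_pow 2 (s j)).add_const R
  have h2 : HasDerivAt (fun t : ℝ => f' (t ^ 2 + R))
      (f'' ((s j) ^ 2 + R) * (2 * s j)) (s j) := by
    have := (hf2 ((s j) ^ 2 + R)).comp (s j) h1
    exact this
  by_cases hjk : j = k
  · subst hjk
    have heq : (fun t : ℝ =>
          Function.update s j t j * f' (∑ l, (Function.update s j t l) ^ 2) / 2)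
        = fun t : ℝ => t * f' (t ^ 2 + R) / 2 :=
      funext fun t => by rw [sum_update_sq r s j t, Function.update_self]
    rw [heq]
    have h3 : HasDerivAt (fun t : ℝ => t * f' (t ^ 2 + R))
        (1 * f' ((s j) ^ 2 + R) + s j * (f'' ((s j) ^ 2 + R) * (2 * s j))) (s j) :=
      (hasDerivAt_id' (s j)).mul h2
    rw [(h3.div_const 2).deriv, sum_sq_split r s j, if_pos rfl]
    ring
  · have heq : (fun t : ℝ =>
          Function.update s j t k * f' (∑ l, (Function.update s j t l) ^ 2) / 2)
        = fun t : ℝ => s k * f' (t ^ 2 + R) / 2 :=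
      funext fun t => by rw [sum_update_sq r s j t, Function.update_of_ne (Ne.symm hjk)]
    rw [heq]
    have h3 : HasDerivAt (fun t : ℝ => s k * f' (t ^ 2 + R))
        (s k * (f'' ((s j) ^ 2 + R) * (2 * s j))) (s j) := h2.const_mul (s k)
    rw [(h3.div_const 2).deriv, sum_sq_split r s j, if_neg hjk]
    ring

lemma interchange_aux {n r : ℕ} (v : Fin r → Fin r → ℝ)
    (A : Fin r → Fin r → (Fin n → Equiv.Perm (Fin r)) → ℝ) (N : ℝ) :
    ∑ j, ∑ k, v j k * (N * ∑ ω, A j k ω)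
      = N * ∑ ω, ∑ j, ∑ k, v j k * A j k ω := by
  have h1 : ∀ j k, v j k * (N * ∑ ω, A j k ω) = N * ∑ ω, v j k * A j k ω := by
    intro j k
    rw [Finset.mul_sum, Finset.mul_sum, Finset.mul_sum]
    exact Finset.sum_congr rfl fun ω _ => by ring
  calc ∑ j, ∑ k, v j k * (N * ∑ ω, A j k ω)
      = ∑ j, ∑ k, N * ∑ ω, v j k * A j k ω :=
        Finset.sum_congr rfl fun j _ => Finset.sum_congr rfl fun k _ => h1 j k
    _ = N * ∑ j, ∑ k, ∑ ω, v j k * A j k ω := by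
        rw [Finset.mul_sum]
        exact Finset.sum_congr rfl fun j _ => (Finset.mul_sum _ _ _).symm
    _ = N * ∑ j, ∑ ω, ∑ k, v j k * A j k ω := by
        rw [Finset.sum_congr rfl fun j (_ : j ∈ Finset.univ) =>
          (Finset.sum_comm (s := Finset.univ) (t := Finset.univ)
            (f := fun k ω => v j k * A j k ω))]
    _ = N * ∑ ω, ∑ j, ∑ k, v j k * A j k ω := by
        rw [Finset.sum_comm]


/-- **Lemma 2.1 (Gaunt–Reinert).** Let `f : ℝ → ℝ` be twice continuously differentiable with
bounded first and second derivatives, and let `g(s) = f(∑_j s_j²)/4`. Then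
`∑_{j,k} σ_{jk} E[∂²g/∂s_j∂s_k(S)] − E[∑_j S_j ∂g/∂s_j(S)]
  = E[F_r f''(F_r) + (1/2)(r − 1 − F_r) f'(F_r)]`. -/
theorem chiSq_mvn_stein_equation_connection (n r : ℕ) (hn : 1 ≤ n) (hr : 2 ≤ r)
    (f f' f'' : ℝ → ℝ)
    (hf1 : ∀ x, HasDerivAt f (f' x) x)
    (hf2 : ∀ x, HasDerivAt f' (f'' x) x)
    (hf2c : Continuous f'')
    (C1 C2 : ℝ) (hb1 : ∀ x, |f' x| ≤ C1) (hb2 : ∀ x, |f'' x| ≤ C2) :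
    (∑ j, ∑ k, covS n r j k *
        ∫ ω, pd j (fun s => pd k (fun s' : Fin r → ℝ => f (∑ l, (s' l) ^ 2) / 4) s)
          (fun l => Sstat n r l ω) ∂(friedmanMeasure n r)) -
      (∫ ω, ∑ j, Sstat n r j ω *
          pd j (fun s' : Fin r → ℝ => f (∑ l, (s' l) ^ 2) / 4) (fun l => Sstat n r l ω)
          ∂(friedmanMeasure n r))
      = ∫ ω, (friedman n r ω * f'' (friedman n r ω)
          + 1 / 2 * ((r : ℝ) - 1 - friedman n r ω) * f' (friedman n r ω))
          ∂(friedmanMeasure n r) := by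
  have hrne : (r : ℝ) ≠ 0 := by positivity
  have hA : ∀ (j k : Fin r) (ω : Fin n → Equiv.Perm (Fin r)),
      pd j (fun s => pd k (fun s' : Fin r → ℝ => f (∑ l, (s' l) ^ 2) / 4) s)
        (fun l => Sstat n r l ω)
      = (if j = k then f' (friedman n r ω) / 2 else 0)
        + Sstat n r j ω * Sstat n r k ω * f'' (friedman n r ω) := by
    intro j k ω
    exact pd_pd_g_eq r f f' f'' hf1 hf2 j k (fun l => Sstat n r l ω)
  have hB : ∀ (j : Fin r) (ω : Fin n → Equiv.Perm (Fin r)),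
      pd j (fun s' : Fin r → ℝ => f (∑ l, (s' l) ^ 2) / 4) (fun l => Sstat n r l ω)
      = Sstat n r j ω * f' (friedman n r ω) / 2 := by
    intro j ω
    exact pd_g_eq r f f' hf1 j (fun l => Sstat n r l ω)
  simp only [hA, hB, covS_eq n r hn hr, friedman_integral n r]
  rw [interchange_aux (fun j k => if j = k then ((r:ℝ)-1)/(r:ℝ) else -1/(r:ℝ))
    (fun j k ω => (if j = k then f' (friedman n r ω) / 2 else 0)
        + Sstat n r j ω * Sstat n r k ω * f'' (friedman n r ω))
    (Fintype.card (Fin n → Equiv.Perm (Fin r)) : ℝ)⁻¹,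
    ← mul_sub, ← Finset.sum_sub_distrib]
  congr 1
  apply Finset.sum_congr rfl
  intro ω _
  have hsum0 : ∑ j, Sstat n r j ω = 0 := sum_Sstat_fiber n r ω
  have hF : friedman n r ω = ∑ j, (Sstat n r j ω) ^ 2 := rfl
  have hin : ∀ j : Fin r,
      ∑ k, (if j = k then ((r:ℝ)-1)/(r:ℝ) else -1/(r:ℝ))
          * ((if j = k then f' (friedman n r ω) / 2 else 0)
            + Sstat n r j ω * Sstat n r k ω * f'' (friedman n r ω))
      = ((r:ℝ)-1)/(r:ℝ) * (f' (friedman n r ω) / 2)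
        + (Sstat n r j ω) ^ 2 * f'' (friedman n r ω) := by
    intro j
    rw [← Finset.add_sum_erase _ _ (Finset.mem_univ j)]
    have herase : ∀ k ∈ Finset.univ.erase j,
        (if j = k then ((r:ℝ)-1)/(r:ℝ) else -1/(r:ℝ))
          * ((if j = k then f' (friedman n r ω) / 2 else 0)
            + Sstat n r j ω * Sstat n r k ω * f'' (friedman n r ω))
        = (-1/(r:ℝ) * Sstat n r j ω * f'' (friedman n r ω)) * Sstat n r k ω := by
      intro k hk
      have hjk : j ≠ k := (Finset.ne_of_mem_erase hk).symm
      rw [if_neg hjk, if_neg hjk]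
      ring
    rw [Finset.sum_congr rfl herase, ← Finset.mul_sum,
      Finset.sum_erase_eq_sub (Finset.mem_univ j), hsum0, if_pos rfl, if_pos rfl]
    field_simp
    ring
  rw [Finset.sum_congr rfl fun j _ => hin j, Finset.sum_add_distrib, Finset.sum_const,
    Finset.card_univ, Fintype.card_fin, nsmul_eq_mul, ← Finset.sum_mul, ← hF]
  have hB2 : ∑ j, Sstat n r j ω * (Sstat n r j ω * f' (friedman n r ω) / 2)
      = friedman n r ω * (f' (friedman n r ω) / 2) := by
    rw [hF, Finset.sum_mul]
    exact Finset.sum_congr rfl fun j _ => by ring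
  rw [hB2]
  field_simp
  ring
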